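/- Extremal entropy of DF-free digraph templates: Let F be a graph with at least one edge, let DF be the digraph obtained from F by replacing each edge with a directed edge in each direction, and let P = (P_n) where P_n is the set of digraphs on [n] containing no copy of DF. Then for every n, ex(n,P) = (1 − log₄3)·ex(n,F) + log₄3·C(n,2), where ex(n,F) is the Turán number of F. -/

import Mathlib

open Filter

/-- The edges of the complete graph `K_n`: ordered pairs `(i, j)` with `i < j`. -/
abbrev Edge (n : ℕ) := {p : Fin n × Fin n // p.1 < p.2}

/-- A digraph on `[n]`, encoded as a 4-colouring of `E(K_n)`: each pair `{i,j}` with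
`i < j` records whether the directed edge `i → j` is present (first component) and
whether `j → i` is present (second component). -/
abbrev DiColouring (n : ℕ) := Edge n → Bool × Bool

/-- A digraph template: a nonempty palette of the 4 possible states at each pair. -/
abbrev DiTemplate (n : ℕ) := Edge n → Finset (Bool × Bool)

def DProper {n : ℕ} (t : DiTemplate n) : Prop := ∀ e, (t e).Nonempty

def DRealises {n : ℕ} (c : DiColouring n) (t : DiTemplate n) : Prop := ∀ e, c e ∈ t e

/-- The entropy (base 4) of a digraph template. -/
noncomputable def DEnt {n : ℕ} (t : DiTemplate n) : ℝ :=
  ∑ e : Edge n, Real.logb 4 ((t e).card)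

/-- The digraph encoded by `c` has a double edge between `u` and `v`. -/
def HasDoubleEdge {n : ℕ} (c : DiColouring n) (u v : Fin n) : Prop :=
  ∃ e : Edge n, ((e.1.1 = u ∧ e.1.2 = v) ∨ (e.1.1 = v ∧ e.1.2 = u)) ∧ c e = (true, true)

/-- The digraph encoded by `c` contains a copy of `DF`, the digraph obtained from the
graph `F` by replacing every edge by a directed edge in each direction. -/
def ContainsDF {m n : ℕ} (F : SimpleGraph (Fin m)) (c : DiColouring n) : Prop :=
  ∃ ψ : Fin m ↪ Fin n, ∀ i j : Fin m, F.Adj i j → HasDoubleEdge c (ψ i) (ψ j)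

/-- `G` contains a subgraph isomorphic to `F`. -/
def ContainsSub {m n : ℕ} (F : SimpleGraph (Fin m)) (G : SimpleGraph (Fin n)) : Prop :=
  ∃ ψ : Fin m ↪ Fin n, ∀ i j : Fin m, F.Adj i j → G.Adj (ψ i) (ψ j)

/-- The Turán number `ex(n, F)`: the maximum number of edges of an `F`-free graph
on `n` vertices. -/
noncomputable def turan {m : ℕ} (F : SimpleGraph (Fin m)) (n : ℕ) : ℕ :=
  sSup {x | ∃ G : SimpleGraph (Fin n), ¬ ContainsSub F G ∧ G.edgeSet.ncard = x}

/-- The extremal entropy `ex(n, P)` for the property `P` of `DF`-free digraphs. -/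
noncomputable def exEntDF {m : ℕ} (F : SimpleGraph (Fin m)) (n : ℕ) : ℝ :=
  sSup {x | ∃ t : DiTemplate n, DProper t ∧
    (∀ c : DiColouring n, DRealises c t → ¬ ContainsDF F c) ∧ DEnt t = x}

open Finset in
lemma edge_unique {n : ℕ} (e e' : Edge n)
    (h : (e'.1.1 = e.1.1 ∧ e'.1.2 = e.1.2) ∨ (e'.1.1 = e.1.2 ∧ e'.1.2 = e.1.1)) : e' = e := by
  rcases h with ⟨h1, h2⟩ | ⟨h1, h2⟩
  · exact Subtype.ext (Prod.ext h1 h2)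
  · exfalso
    have := e.2; have := e'.2
    rw [h1, h2] at *
    omega

open Finset in
lemma ncard_edgeSet_eq {n : ℕ} (G : SimpleGraph (Fin n)) [DecidableRel G.Adj] :
    G.edgeSet.ncard = (univ.filter (fun e : Edge n => G.Adj e.1.1 e.1.2)).card := by
  classical
  rw [Set.ncard_eq_toFinset_card', ← SimpleGraph.edgeFinset, eq_comm]
  · apply Finset.card_bij (fun (e : Edge n) _ => s(e.1.1, e.1.2))
    · intro e he
      simp only [mem_filter] at he
      simpa [SimpleGraph.mem_edgeFinset] using he.2
    · intro e he e' he' hee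
      rw [Sym2.eq_iff] at hee
      exact edge_unique e' e hee
    · intro x hx
      induction x using Sym2.inductionOn with
      | hf a b =>
        simp only [SimpleGraph.mem_edgeFinset, SimpleGraph.mem_edgeSet] at hx
        rcases lt_or_gt_of_ne hx.ne with h | h
        · exact ⟨⟨(a, b), h⟩, by simpa using hx, rfl⟩
        · exact ⟨⟨(b, a), h⟩, by simpa using hx.symm, Sym2.eq_swap⟩

lemma card_edge {n : ℕ} : Fintype.card (Edge n) = n.choose 2 := by
  classical
  have h := ncard_edgeSet_eq (⊤ : SimpleGraph (Fin n))
  have h2 : (Finset.univ.filter (fun e : Edge n => (⊤ : SimpleGraph (Fin n)).Adj e.1.1 e.1.2))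
      = Finset.univ := by
    ext e; simp [SimpleGraph.top_adj, (e.2).ne]
  rw [h2, Finset.card_univ] at h
  rw [← h, Set.ncard_eq_toFinset_card', ← SimpleGraph.edgeFinset]
  simpa using SimpleGraph.card_edgeFinset_top_eq_card_choose_two (V := Fin n)
open Finset in
lemma mkEdge {n : ℕ} (i j : Fin n) (hij : i ≠ j) :
    ∃ e : Edge n, (e.1.1 = i ∧ e.1.2 = j) ∨ (e.1.1 = j ∧ e.1.2 = i) := by
  rcases lt_or_gt_of_ne hij with h | h
  · exact ⟨⟨(i, j), h⟩, Or.inl ⟨rfl, rfl⟩⟩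
  · exact ⟨⟨(j, i), h⟩, Or.inr ⟨rfl, rfl⟩⟩

/-- Extremal entropy of `DF`-free digraph templates (Theorem 4.4). -/
theorem exEnt_DF_free {m : ℕ} (F : SimpleGraph (Fin m)) (hF : ∃ i j, F.Adj i j) (n : ℕ) :
    exEntDF F n =
      (1 - Real.logb 4 3) * (turan F n : ℝ) + Real.logb 4 3 * (n.choose 2 : ℝ) := by
  classical
  have hb : (1 : ℝ) < 4 := by norm_num
  set l : ℝ := Real.logb 4 3 with hldef
  have hl0 : 0 ≤ l := Real.logb_nonneg hb (by norm_num)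
  have hl1 : l ≤ 1 := by
    have h := Real.logb_le_logb_of_le hb (by norm_num : (0:ℝ) < 3) (by norm_num : (3:ℝ) ≤ 4)
    rwa [Real.logb_self_eq_one hb] at h
  have hcard4 : (Finset.univ : Finset (Bool × Bool)).card = 4 := by decide
  -- Turán facts
  set TS : Set ℕ := {x | ∃ G : SimpleGraph (Fin n), ¬ ContainsSub F G ∧ G.edgeSet.ncard = x}
    with hTSdef
  have hbound : ∀ x ∈ TS, x ≤ n.choose 2 := by
    rintro x ⟨G, -, rfl⟩
    rw [ncard_edgeSet_eq]
    calc (Finset.univ.filter fun e : Edge n => G.Adj e.1.1 e.1.2).card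
        ≤ (Finset.univ : Finset (Edge n)).card := Finset.card_filter_le _ _
      _ = n.choose 2 := by rw [Finset.card_univ, card_edge]
  have hTSne : TS.Nonempty := by
    refine ⟨(⊥ : SimpleGraph (Fin n)).edgeSet.ncard, ⊥, ?_, rfl⟩
    rintro ⟨ψ, hψ⟩
    obtain ⟨i, j, hij⟩ := hF
    exact hψ i j hij
  have hturan : turan F n = sSup TS := rfl
  have hTmem : turan F n ∈ TS := by rw [hturan]; exact Nat.sSup_mem hTSne ⟨n.choose 2, hbound⟩
  obtain ⟨G0, hG0free, hG0card⟩ := hTmem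
  set T : ℝ := (1 - l) * (turan F n : ℝ) + l * (n.choose 2 : ℝ) with hTdef
  set S : Set ℝ := {x | ∃ t : DiTemplate n, DProper t ∧
    (∀ c : DiColouring n, DRealises c t → ¬ ContainsDF F c) ∧ DEnt t = x} with hSdef
  -- The extremal template t0
  set t0 : DiTemplate n := fun e =>
    if G0.Adj e.1.1 e.1.2 then Finset.univ else Finset.univ.erase (true, true) with ht0def
  have ht0proper : DProper t0 := by
    intro e
    simp only [ht0def]
    split
    · exact Finset.univ_nonempty
    · exact ⟨(false, false), by simp⟩
  have ht0free : ∀ c : DiColouring n, DRealises c t0 → ¬ ContainsDF F c := by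
    rintro c hc ⟨ψ, hψ⟩
    apply hG0free
    refine ⟨ψ, fun i j hij => ?_⟩
    obtain ⟨e, hends, hce⟩ := hψ i j hij
    have hc' := hc e
    have hadj : G0.Adj e.1.1 e.1.2 := by
      by_contra h
      simp only [ht0def, if_neg h] at hc'
      rw [hce] at hc'
      simp at hc'
    rcases hends with ⟨h1, h2⟩ | ⟨h1, h2⟩
    · rwa [h1, h2] at hadj
    · rw [h1, h2] at hadj; exact hadj.symm
  have ht0ent : DEnt t0 = T := by
    have hterm : ∀ e : Edge n,
        Real.logb 4 ((t0 e).card) = if G0.Adj e.1.1 e.1.2 then 1 else l := by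
      intro e
      simp only [ht0def]
      split
      · rw [hcard4]
        exact_mod_cast Real.logb_self_eq_one hb
      · rw [Finset.card_erase_of_mem (Finset.mem_univ _), hcard4]
        norm_num
        exact hldef.symm
    rw [DEnt, Finset.sum_congr rfl (fun e _ => hterm e), Finset.sum_ite,
      Finset.sum_const, Finset.sum_const]
    set k := (Finset.univ.filter fun e : Edge n => G0.Adj e.1.1 e.1.2).card with hk
    have hkt : k = turan F n := by rw [← hG0card, ncard_edgeSet_eq]
    have hksum : k + (Finset.univ.filter fun e : Edge n => ¬ G0.Adj e.1.1 e.1.2).card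
        = n.choose 2 := by
      rw [hk, Finset.card_filter_add_card_filter_not, Finset.card_univ, card_edge]
    have hksum' : (k : ℝ) +
        ((Finset.univ.filter fun e : Edge n => ¬ G0.Adj e.1.1 e.1.2).card : ℝ)
        = (n.choose 2 : ℝ) := by exact_mod_cast congrArg (Nat.cast (R := ℝ)) hksum
    simp only [nsmul_eq_mul, smul_eq_mul, hTdef]
    rw [← hkt]
    nlinarith [hksum']
  have hmemS : T ∈ S := ⟨t0, ht0proper, ht0free, ht0ent⟩
  -- Upper bound for arbitrary templates
  have hub : ∀ x ∈ S, x ≤ T := by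
    rintro x ⟨t, hp, hfree, rfl⟩
    set Gt : SimpleGraph (Fin n) :=
      { Adj := fun i j => ∃ e : Edge n,
          ((e.1.1 = i ∧ e.1.2 = j) ∨ (e.1.1 = j ∧ e.1.2 = i)) ∧ (true, true) ∈ t e
        symm := by
          refine ⟨?_⟩
          rintro i j ⟨e, h1, h2⟩
          exact ⟨e, h1.symm, h2⟩
        loopless := by
          refine ⟨?_⟩
          rintro i ⟨e, (⟨h1, h2⟩ | ⟨h1, h2⟩), -⟩ <;>
          · have h := e.2
            rw [h1, h2] at h
            exact lt_irrefl _ h } with hGtdef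
    have hGtadj : ∀ e : Edge n, Gt.Adj e.1.1 e.1.2 ↔ (true, true) ∈ t e := by
      intro e
      constructor
      · rintro ⟨e', h1, h2⟩
        rwa [edge_unique e e' h1] at h2
      · intro h
        exact ⟨e, Or.inl ⟨rfl, rfl⟩, h⟩
    have hGtfree : ¬ ContainsSub F Gt := by
      rintro ⟨ψ, hψ⟩
      set c : DiColouring n := fun e =>
        if (true, true) ∈ t e then (true, true) else (hp e).choose with hcdef
      have hcr : DRealises c t := by
        intro e
        simp only [hcdef]
        split
        · assumption
        · exact (hp e).choose_spec
      apply hfree c hcr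
      refine ⟨ψ, fun i j hij => ?_⟩
      obtain ⟨e, h1, h2⟩ := hψ i j hij
      exact ⟨e, h1, by simp only [hcdef]; rw [if_pos h2]⟩
    have hkle : ((Finset.univ.filter fun e : Edge n => (true, true) ∈ t e).card : ℕ)
        ≤ turan F n := by
      have hmem : Gt.edgeSet.ncard ∈ TS := ⟨Gt, hGtfree, rfl⟩
      have h2 : Gt.edgeSet.ncard ≤ turan F n := by
        rw [hturan]; exact le_csSup ⟨n.choose 2, hbound⟩ hmem
      rwa [ncard_edgeSet_eq,
        Finset.filter_congr (fun e _ => by rw [hGtadj e])] at h2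
    -- entropy bound
    set P : Edge n → Prop := fun e => (true, true) ∈ t e with hPdef
    set k := (Finset.univ.filter P).card with hk
    set k' := (Finset.univ.filter fun e => ¬ P e).card with hk'
    have hsplit : DEnt t = (∑ e ∈ Finset.univ.filter P, Real.logb 4 ((t e).card))
        + ∑ e ∈ Finset.univ.filter (fun e => ¬ P e), Real.logb 4 ((t e).card) :=
      (Finset.sum_filter_add_sum_filter_not _ _ _).symm
    have hpos : ∀ e : Edge n, (0 : ℝ) < ((t e).card : ℝ) := by
      intro e
      exact_mod_cast Finset.card_pos.2 (hp e)
    have hb1 : ∑ e ∈ Finset.univ.filter P, Real.logb 4 ((t e).card) ≤ (k : ℝ) := by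
      calc ∑ e ∈ Finset.univ.filter P, Real.logb 4 ((t e).card)
          ≤ ∑ _e ∈ Finset.univ.filter P, (1 : ℝ) := by
            refine Finset.sum_le_sum fun e _ => ?_
            have hle : ((t e).card : ℝ) ≤ 4 := by
              exact_mod_cast (Finset.card_le_univ _).trans_eq hcard4
            calc Real.logb 4 ((t e).card) ≤ Real.logb 4 4 :=
                  Real.logb_le_logb_of_le hb (hpos e) hle
              _ = 1 := Real.logb_self_eq_one hb
        _ = (k : ℝ) := by rw [Finset.sum_const, nsmul_eq_mul, mul_one]
    have hb2 : ∑ e ∈ Finset.univ.filter (fun e => ¬ P e), Real.logb 4 ((t e).card)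
        ≤ (k' : ℝ) * l := by
      calc ∑ e ∈ Finset.univ.filter (fun e => ¬ P e), Real.logb 4 ((t e).card)
          ≤ ∑ _e ∈ Finset.univ.filter (fun e => ¬ P e), l := by
            refine Finset.sum_le_sum fun e he => ?_
            simp only [Finset.mem_filter, hPdef] at he
            have hsub : t e ⊆ Finset.univ.erase (true, true) := by
              intro x hx
              refine Finset.mem_erase.2 ⟨?_, Finset.mem_univ _⟩
              rintro rfl
              exact he.2 hx
            have hle : ((t e).card : ℝ) ≤ 3 := by
              have := Finset.card_le_card hsub
              rw [Finset.card_erase_of_mem (Finset.mem_univ _), hcard4] at this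
              exact_mod_cast this
            exact Real.logb_le_logb_of_le hb (hpos e) hle
        _ = (k' : ℝ) * l := by rw [Finset.sum_const, nsmul_eq_mul]
    have hkk' : (k : ℝ) + (k' : ℝ) = (n.choose 2 : ℝ) := by
      have : k + k' = n.choose 2 := by
        rw [hk, hk', Finset.card_filter_add_card_filter_not,
          Finset.card_univ, card_edge]
      exact_mod_cast congrArg (Nat.cast (R := ℝ)) this
    have hkle' : (k : ℝ) ≤ (turan F n : ℝ) := by exact_mod_cast hkle
    rw [hsplit, hTdef]
    nlinarith [mul_nonneg (sub_nonneg.2 hl1) (sub_nonneg.2 hkle')]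
  exact le_antisymm (csSup_le ⟨T, hmemS⟩ hub) (le_csSup ⟨T, fun x hx => hub x hx⟩ hmemS)
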